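/- arXiv:1807.04261 — 2 statements merged into one kernel-verified Lean document; each statement's English description precedes it below -/
import Mathlib

section
/- Fix 0 < ε < d⁻⁴·(1/(16π))² and let d ≥ 2. Suppose W_i ∈ ℝ^{n_i×n_{i−1}} satisfies the Weight Distribution Condition with constant ε for i = 1,…,d. Then for all nonzero x, y ∈ ℝ^k, writing x_d := (Π_{i=d}^1 W_{i,+,x})·x and y_d := (Π_{i=d}^1 W_{i,+,y})·y, we have | ‖y_d‖/‖x_d‖ − ‖y‖/‖x‖ | ≤ 8·d·ε·‖y‖/‖x‖. -/
open Real Filter Set MeasureTheory ProbabilityTheory Matrix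
open scoped Classical BigOperators NNReal ENNReal

noncomputable section

namespace DPR

/-- Euclidean dot product on `Fin n → ℝ`. -/
def dotp {n : ℕ} (u v : Fin n → ℝ) : ℝ := ∑ i, u i * v i

/-- Euclidean norm on `Fin n → ℝ`. -/
def nrm {n : ℕ} (v : Fin n → ℝ) : ℝ := Real.sqrt (dotp v v)

/-- Angle between two vectors. -/
def angl {n : ℕ} (u v : Fin n → ℝ) : ℝ := Real.arccos (dotp u v / (nrm u * nrm v))

/-- Spectral norm of a matrix: the operator norm of the induced map between
Euclidean spaces. -/
def specNorm {a b : ℕ} (M : Matrix (Fin a) (Fin b) ℝ) : ℝ :=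
  ‖LinearMap.toContinuousLinearMap (Matrix.toEuclideanLin M)‖

/-- The symmetric matrix `M_{x̂↔ŷ}` sending `x̂ ↦ ŷ`, `ŷ ↦ x̂` and vanishing on
`span{x,y}ᗮ`. -/
def swapMat {n : ℕ} (x y : Fin n → ℝ) : Matrix (Fin n) (Fin n) ℝ :=
  let u := (nrm x)⁻¹ • x
  let v := (nrm y)⁻¹ • y
  let c := dotp u v
  let w := v - c • u
  if dotp w w = 0 then c • Matrix.vecMulVec u u
  else
    c • Matrix.vecMulVec u u + Matrix.vecMulVec u w + Matrix.vecMulVec w u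
      - (c / dotp w w) • Matrix.vecMulVec w w

/-- `Q_{x,y} = ((π − θ)/(2π))·I + (sin θ/(2π))·M_{x̂↔ŷ}`. -/
def Qmat {k : ℕ} (x y : Fin k → ℝ) : Matrix (Fin k) (Fin k) ℝ :=
  ((π - angl x y) / (2 * π)) • (1 : Matrix (Fin k) (Fin k) ℝ)
    + (Real.sin (angl x y) / (2 * π)) • swapMat x y

/-- `Φ_{z,w} = ((π − 2θ)/π)·I + (2 sin θ/π)·M_{ẑ↔ŵ}`. -/
def Phi {n : ℕ} (z w : Fin n → ℝ) : Matrix (Fin n) (Fin n) ℝ :=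
  ((π - 2 * angl z w) / π) • (1 : Matrix (Fin n) (Fin n) ℝ)
    + (2 * Real.sin (angl z w) / π) • swapMat z w

/-- `W_{+,v} = diag(1_{Wv>0})·W`. -/
def posPart {a b : ℕ} (W : Matrix (Fin a) (Fin b) ℝ) (v : Fin b → ℝ) :
    Matrix (Fin a) (Fin b) ℝ :=
  Matrix.of fun i j => if 0 < W.mulVec v i then W i j else 0

/-- Weight Distribution Condition with constant `ε`. -/
def WDC {a k : ℕ} (W : Matrix (Fin a) (Fin k) ℝ) (ε : ℝ) : Prop :=
  ∀ x y : Fin k → ℝ, x ≠ 0 → y ≠ 0 →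
    specNorm ((posPart W x)ᵀ * posPart W y - Qmat x y) ≤ ε

/-- `A_z = diag(sgn(Az))·A`. -/
def signedMat {a b : ℕ} (A : Matrix (Fin a) (Fin b) ℝ) (z : Fin b → ℝ) :
    Matrix (Fin a) (Fin b) ℝ :=
  Matrix.of fun i j => Real.sign (A.mulVec z i) * A i j

/-- Entrywise ReLU. -/
def reluV {a : ℕ} (v : Fin a → ℝ) : Fin a → ℝ := fun i => max (v i) 0

/-- Entrywise absolute value. -/
def absV {a : ℕ} (v : Fin a → ℝ) : Fin a → ℝ := fun i => |v i|

/-- The `d`-layer ReLU network `G(x) = relu(W_d ⋯ relu(W_1 x) ⋯)`. -/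
def net (n : ℕ → ℕ) (W : ∀ i : ℕ, Matrix (Fin (n (i + 1))) (Fin (n i)) ℝ) :
    (d : ℕ) → (Fin (n 0) → ℝ) → Fin (n d) → ℝ
  | 0, x => x
  | d + 1, x => reluV ((W d).mulVec (net n W d x))

/-- The product `Π_{i=d}^1 W_{i,+,x}`. -/
def layerProd (n : ℕ → ℕ) (W : ∀ i : ℕ, Matrix (Fin (n (i + 1))) (Fin (n i)) ℝ) :
    (d : ℕ) → (Fin (n 0) → ℝ) → Matrix (Fin (n d)) (Fin (n 0)) ℝ
  | 0, _ => 1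
  | d + 1, x => posPart (W d) ((layerProd n W d x).mulVec x) * layerProd n W d x

/-- The matrix `W_{i+1,+,x}` (the `(i+1)`-st layer, zero-indexed as `i`). -/
def layerPos (n : ℕ → ℕ) (W : ∀ i : ℕ, Matrix (Fin (n (i + 1))) (Fin (n i)) ℝ)
    (i : ℕ) (x : Fin (n 0) → ℝ) : Matrix (Fin (n (i + 1))) (Fin (n i)) ℝ :=
  posPart (W i) ((layerProd n W i x).mulVec x)

/-- `g(θ) = arccos((cos θ·(π − θ) + sin θ)/π)`. -/
def gfun (θ : ℝ) : ℝ := Real.arccos ((Real.cos θ * (π - θ) + Real.sin θ) / π)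

/-- The sequence `θ_0 = θ₀`, `θ_{i+1} = g(θ_i)`. -/
def thetaSeq (θ₀ : ℝ) : ℕ → ℝ
  | 0 => θ₀
  | i + 1 => gfun (thetaSeq θ₀ i)

/-- `ρ_d`. -/
def rho (d : ℕ) : ℝ :=
  -(2 * Real.sin (thetaSeq π d)) / π +
    ((π - 2 * thetaSeq π d) / π) *
      ∑ i ∈ Finset.range d,
        (Real.sin (thetaSeq π i) / π) * ∏ j ∈ Finset.Ico (i + 1) d, (π - thetaSeq π j) / π

/-- The vector `h_{x,y}`. -/
def hvec (d : ℕ) {k : ℕ} (x y : Fin k → ℝ) : Fin k → ℝ :=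
  (-(nrm y / 2 ^ d) * ((π - 2 * thetaSeq (angl x y) d) / π) *
      ∏ i ∈ Finset.range d, (π - thetaSeq (angl x y) i) / π) • ((nrm y)⁻¹ • y) +
    ((1 / 2 ^ d) *
        (nrm x -
          nrm y *
            (2 * Real.sin (thetaSeq (angl x y) d) / π -
              ((π - 2 * thetaSeq (angl x y) d) / π) *
                ∑ i ∈ Finset.range d,
                  (Real.sin (thetaSeq (angl x y) i) / π) *
                    ∏ j ∈ Finset.Ico (i + 1) d, (π - thetaSeq (angl x y) j) / π))) •
      ((nrm x)⁻¹ • x)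

/-- The vector `h̃_{x,y}`. -/
def htil (d : ℕ) {k : ℕ} (x y : Fin k → ℝ) : Fin k → ℝ :=
  (1 / 2 ^ d) •
    ((∏ i ∈ Finset.range d, (π - thetaSeq (angl x y) i) / π) • y +
      (∑ i ∈ Finset.range d,
          (Real.sin (thetaSeq (angl x y) i) / π) *
            ∏ j ∈ Finset.Ico (i + 1) d, (π - thetaSeq (angl x y) j) / π) •
        ((nrm y / nrm x) • x))

/-- The set `S_{ε,x₀}`. -/
def Sset (d : ℕ) {k : ℕ} (ε : ℝ) (x₀ : Fin k → ℝ) : Set (Fin k → ℝ) :=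
  {x | x ≠ 0 ∧ nrm (hvec d x x₀) ≤ ε / 2 ^ d * max (nrm x) (nrm x₀)}

/-- The vector `v̄_{x,y}`. -/
def vbar (n : ℕ → ℕ) (W : ∀ i : ℕ, Matrix (Fin (n (i + 1))) (Fin (n i)) ℝ) (d : ℕ)
    (x y : Fin (n 0) → ℝ) : Fin (n 0) → ℝ :=
  (layerProd n W d x)ᵀ.mulVec ((layerProd n W d x).mulVec x) -
    (layerProd n W d x)ᵀ.mulVec
      ((Phi ((layerProd n W d x).mulVec x) ((layerProd n W d y).mulVec y)).mulVec
        ((layerProd n W d y).mulVec y))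

/-- The objective `f(x) = (1/2)·‖ |A G(x)| − |A G(x₀)| ‖²`. -/
def objf (n : ℕ → ℕ) (W : ∀ i : ℕ, Matrix (Fin (n (i + 1))) (Fin (n i)) ℝ) (d m : ℕ)
    (A : Matrix (Fin m) (Fin (n d)) ℝ) (x₀ x : Fin (n 0) → ℝ) : ℝ :=
  (1 / 2) * nrm (absV (A.mulVec (net n W d x)) - absV (A.mulVec (net n W d x₀))) ^ 2

/-- One-sided directional derivative `D_v f(x) = L`. -/
def HasDirDeriv {k : ℕ} (f : (Fin k → ℝ) → ℝ) (x v : Fin k → ℝ) (L : ℝ) : Prop :=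
  Filter.Tendsto (fun t : ℝ => (f (x + t • v) - f x) / t) (nhdsWithin 0 (Set.Ioi 0)) (nhds L)

/-- Range Restricted Concentration Property with constant `ε`. -/
def RRCP (n : ℕ → ℕ) (W : ∀ i : ℕ, Matrix (Fin (n (i + 1))) (Fin (n i)) ℝ) (d m : ℕ)
    (A : Matrix (Fin m) (Fin (n d)) ℝ) (ε : ℝ) : Prop :=
  ∀ x y x₁ x₂ x₃ x₄ : Fin (n 0) → ℝ, x ≠ 0 → y ≠ 0 →
    |dotp
        ((((signedMat A (net n W d x))ᵀ * signedMat A (net n W d y)) -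
              Phi (net n W d x) (net n W d y)).mulVec
          (net n W d x₁ - net n W d x₂))
        (net n W d x₃ - net n W d x₄)| ≤
      7 * ε * nrm (net n W d x₁ - net n W d x₂) * nrm (net n W d x₃ - net n W d x₄)

/-- Law of an `a × b` matrix with i.i.d. `N(0, v)` entries. -/
def gaussMatrix (a b : ℕ) (v : ℝ≥0) : Measure (Fin a → Fin b → ℝ) :=
  Measure.pi fun _ : Fin a => Measure.pi fun _ : Fin b => gaussianReal 0 v

instance (a b : ℕ) (v : ℝ≥0) : IsProbabilityMeasure (gaussMatrix a b v) := by
  unfold gaussMatrix; infer_instance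

/-- Extend a `Fin d`-indexed family of weight matrices to an `ℕ`-indexed one. -/
def extW (d : ℕ) (n : ℕ → ℕ)
    (ω : ∀ i : Fin d, Fin (n (i.1 + 1)) → Fin (n i.1) → ℝ) (i : ℕ) :
    Matrix (Fin (n (i + 1))) (Fin (n i)) ℝ :=
  if h : i < d then Matrix.of (ω ⟨i, h⟩) else 0

/-- Joint law of the `d` Gaussian weight matrices (variances `1/n_i`) and the
Gaussian measurement matrix (variance `1/m`). -/
def netMeasure (d m : ℕ) (n : ℕ → ℕ) :
    Measure ((∀ i : Fin d, Fin (n (i.1 + 1)) → Fin (n i.1) → ℝ) × (Fin m → Fin (n d) → ℝ)) :=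
  (Measure.pi fun i : Fin d => gaussMatrix (n (i.1 + 1)) (n i.1) ((n (i.1 + 1) : ℝ≥0))⁻¹).prod
    (gaussMatrix m (n d) ((m : ℝ≥0))⁻¹)

/-- The geometric conclusion: outside two small balls around `x₀` and `−ρ_d·x₀`
there is a descent direction, and the origin is a local maximum direction-wise. -/
def DescentConcl (n : ℕ → ℕ) (W : ∀ i : ℕ, Matrix (Fin (n (i + 1))) (Fin (n i)) ℝ)
    (d m : ℕ) (A : Matrix (Fin m) (Fin (n d)) ℝ) (ε K₂ : ℝ) : Prop :=
  ∀ x₀ : Fin (n 0) → ℝ, x₀ ≠ 0 →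
    (∀ x : Fin (n 0) → ℝ, x ≠ 0 →
        ¬nrm (x - x₀) < K₂ * (d : ℝ) ^ 3 * ε ^ ((1 : ℝ) / 4) * nrm x₀ →
        ¬nrm (x + rho d • x₀) < K₂ * (d : ℝ) ^ 14 * ε ^ ((1 : ℝ) / 4) * nrm x₀ →
        ∃ v : Fin (n 0) → ℝ, ∃ L : ℝ,
          L < 0 ∧ HasDirDeriv (objf n W d m A x₀) x (-v) L) ∧
    ∀ x : Fin (n 0) → ℝ, x ≠ 0 →
      ∃ L : ℝ, L < 0 ∧ HasDirDeriv (objf n W d m A x₀) 0 x L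
/-! ### Auxiliary lemmas for Statement 6 -/

lemma dotp_self_nonneg {m : ℕ} (v : Fin m → ℝ) : 0 ≤ dotp v v :=
  Finset.sum_nonneg fun i _ => mul_self_nonneg _

lemma dotp_self_pos {m : ℕ} {v : Fin m → ℝ} (hv : v ≠ 0) : 0 < dotp v v := by
  rcases (dotp_self_nonneg v).lt_or_eq with h | h
  · exact h
  · exfalso; apply hv
    funext i
    have h0 : ∀ j ∈ Finset.univ, (0:ℝ) ≤ v j * v j := fun j _ => mul_self_nonneg _
    have := (Finset.sum_eq_zero_iff_of_nonneg h0).1 h.symm i (Finset.mem_univ i)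
    exact mul_self_eq_zero.mp this

lemma nrm_eq_sqrt {m : ℕ} (v : Fin m → ℝ) : nrm v = Real.sqrt (dotp v v) := rfl

lemma nrm_mul_self {m : ℕ} (v : Fin m → ℝ) : nrm v * nrm v = dotp v v :=
  Real.mul_self_sqrt (dotp_self_nonneg v)

lemma nrm_nonneg' {m : ℕ} (v : Fin m → ℝ) : 0 ≤ nrm v := Real.sqrt_nonneg _

lemma nrm_euclid {m : ℕ} (v : Fin m → ℝ) :
    ‖(WithLp.equiv 2 (Fin m → ℝ)).symm v‖ = nrm v := by
  rw [EuclideanSpace.norm_eq, nrm_eq_sqrt]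
  congr 1
  refine Finset.sum_congr rfl fun i _ => ?_
  simp [WithLp.equiv_symm_apply, PiLp.toLp_apply, sq_abs, sq]

/-- Spectral-norm bound on quadratic forms. -/
lemma abs_dotp_mulVec_le {a b : ℕ} (M : Matrix (Fin a) (Fin b) ℝ)
    (u : Fin a → ℝ) (v : Fin b → ℝ) :
    |dotp u (M.mulVec v)| ≤ specNorm M * nrm u * nrm v := by
  set u' : EuclideanSpace ℝ (Fin a) := (WithLp.equiv 2 _).symm u with hu'
  set v' : EuclideanSpace ℝ (Fin b) := (WithLp.equiv 2 _).symm v with hv'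
  have h1 : dotp u (M.mulVec v) = inner (𝕜 := ℝ) ((Matrix.toEuclideanLin M) v') u' := by
    rw [hv', WithLp.equiv_symm_apply, Matrix.toEuclideanLin_apply_piLp_toLp]
    simp only [PiLp.inner_apply, RCLike.inner_apply, conj_trivial]
    rw [dotp]
    refine Finset.sum_congr rfl fun i _ => ?_
    simp [hu', WithLp.equiv_symm_apply, PiLp.toLp_apply, mul_comm]
  rw [h1]
  have h2 := abs_real_inner_le_norm ((Matrix.toEuclideanLin M) v') u'
  have h3 : ‖(Matrix.toEuclideanLin M) v'‖ ≤ specNorm M * ‖v'‖ := by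
    have := (LinearMap.toContinuousLinearMap (Matrix.toEuclideanLin M)).le_opNorm v'
    simpa [specNorm] using this
  calc |inner (𝕜 := ℝ) ((Matrix.toEuclideanLin M) v') u'|
      ≤ ‖(Matrix.toEuclideanLin M) v'‖ * ‖u'‖ := h2
    _ ≤ specNorm M * ‖v'‖ * ‖u'‖ := by
        apply mul_le_mul_of_nonneg_right h3 (norm_nonneg _)
    _ = specNorm M * nrm u * nrm v := by
        rw [hu', hv', nrm_euclid, nrm_euclid]; ring

lemma angl_self {m : ℕ} {z : Fin m → ℝ} (hz : z ≠ 0) : angl z z = 0 := by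
  rw [angl, nrm_mul_self, div_self (dotp_self_pos hz).ne', Real.arccos_one]

lemma Qmat_self {m : ℕ} {z : Fin m → ℝ} (hz : z ≠ 0) :
    Qmat z z = (1/2 : ℝ) • (1 : Matrix (Fin m) (Fin m) ℝ) := by
  rw [Qmat, angl_self hz]
  have hπ : (π:ℝ) ≠ 0 := Real.pi_ne_zero
  rw [Real.sin_zero]
  simp only [zero_div, zero_smul, add_zero, sub_zero]
  congr 1
  field_simp

/-- One WDC layer roughly halves the squared norm. -/
lemma layer_step {a k : ℕ} {W : Matrix (Fin a) (Fin k) ℝ} {ε : ℝ} (hW : WDC W ε)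
    {z : Fin k → ℝ} (hz : z ≠ 0) :
    |dotp ((posPart W z).mulVec z) ((posPart W z).mulVec z) - (1/2) * dotp z z|
      ≤ ε * dotp z z := by
  have hspec := hW z z hz hz
  set A := posPart W z with hA
  have h1 : dotp (A.mulVec z) (A.mulVec z) = dotp z ((Aᵀ * A).mulVec z) := by
    show A.mulVec z ⬝ᵥ A.mulVec z = z ⬝ᵥ (Aᵀ * A).mulVec z
    rw [← Matrix.mulVec_mulVec, Matrix.dotProduct_mulVec z, Matrix.vecMul_transpose]
  have h2 : dotp z ((Qmat z z).mulVec z) = (1/2) * dotp z z := by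
    rw [Qmat_self hz]
    show z ⬝ᵥ ((1/2 : ℝ) • (1 : Matrix (Fin k) (Fin k) ℝ)).mulVec z = _
    rw [Matrix.smul_mulVec, Matrix.one_mulVec, dotProduct_smul]
    rfl
  have h3 : dotp ((posPart W z).mulVec z) ((posPart W z).mulVec z) - (1/2) * dotp z z
      = dotp z ((Aᵀ * A - Qmat z z).mulVec z) := by
    rw [← hA, h1, ← h2, Matrix.sub_mulVec]
    show _ = z ⬝ᵥ ((Aᵀ * A).mulVec z - (Qmat z z).mulVec z)
    rw [dotProduct_sub]
    rfl
  rw [h3]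
  calc |dotp z ((Aᵀ * A - Qmat z z).mulVec z)|
      ≤ specNorm (Aᵀ * A - Qmat z z) * nrm z * nrm z := abs_dotp_mulVec_le _ z z
    _ ≤ ε * nrm z * nrm z := by
        have := mul_le_mul_of_nonneg_right (mul_le_mul_of_nonneg_right hspec
          (nrm_nonneg' z)) (nrm_nonneg' z)
        exact this
    _ = ε * dotp z z := by rw [mul_assoc, nrm_mul_self]

/-- Squared-norm bounds for the layered product, by induction. -/
lemma layerProd_bounds {d : ℕ} {ε : ℝ} (hε0 : 0 < ε) (hε : ε < 1/2)
    (n : ℕ → ℕ) (W : ∀ i : ℕ, Matrix (Fin (n (i + 1))) (Fin (n i)) ℝ)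
    (hW : ∀ i < d, WDC (W i) ε) {x : Fin (n 0) → ℝ} (hx : x ≠ 0) :
    ∀ i ≤ d, (layerProd n W i x).mulVec x ≠ 0 ∧
      (1/2 - ε)^i * dotp x x ≤
        dotp ((layerProd n W i x).mulVec x) ((layerProd n W i x).mulVec x) ∧
      dotp ((layerProd n W i x).mulVec x) ((layerProd n W i x).mulVec x) ≤
        (1/2 + ε)^i * dotp x x := by
  intro i
  induction i with
  | zero =>
      intro _
      refine ⟨by simpa [layerProd, Matrix.one_mulVec] using hx, ?_, ?_⟩ <;>
        simp [layerProd, Matrix.one_mulVec]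
  | succ i ih =>
      intro hid
      obtain ⟨hz, hlo, hhi⟩ := ih (le_of_lt (Nat.lt_of_succ_le hid))
      set z := (layerProd n W i x).mulVec x with hzdef
      have hnext : (layerProd n W (i+1) x).mulVec x = (posPart (W i) z).mulVec z := by
        rw [layerProd, ← Matrix.mulVec_mulVec]
      have hstep := layer_step (hW i (Nat.lt_of_succ_le hid)) hz
      have habs := abs_le.mp hstep
      have hzz : 0 < dotp z z := dotp_self_pos hz
      have hxx : 0 < dotp x x := dotp_self_pos hx
      have hαpos : (0:ℝ) < 1/2 - ε := by linarith
      have hαi : (0:ℝ) ≤ (1/2 - ε)^i := le_of_lt (pow_pos hαpos i)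
      have hlo' : (1/2 - ε)^(i+1) * dotp x x ≤
          dotp ((posPart (W i) z).mulVec z) ((posPart (W i) z).mulVec z) := by
        have h1 : (1/2 - ε) * dotp z z ≤
            dotp ((posPart (W i) z).mulVec z) ((posPart (W i) z).mulVec z) := by
          nlinarith [habs.1]
        calc (1/2 - ε)^(i+1) * dotp x x = (1/2 - ε) * ((1/2 - ε)^i * dotp x x) := by ring
          _ ≤ (1/2 - ε) * dotp z z := by
              exact mul_le_mul_of_nonneg_left hlo (le_of_lt hαpos)
          _ ≤ _ := h1
      have hhi' : dotp ((posPart (W i) z).mulVec z) ((posPart (W i) z).mulVec z) ≤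
          (1/2 + ε)^(i+1) * dotp x x := by
        have h1 : dotp ((posPart (W i) z).mulVec z) ((posPart (W i) z).mulVec z) ≤
            (1/2 + ε) * dotp z z := by nlinarith [habs.2]
        have hβpos : (0:ℝ) ≤ 1/2 + ε := by linarith
        calc dotp ((posPart (W i) z).mulVec z) ((posPart (W i) z).mulVec z)
            ≤ (1/2 + ε) * dotp z z := h1
          _ ≤ (1/2 + ε) * ((1/2 + ε)^i * dotp x x) :=
              mul_le_mul_of_nonneg_left hhi hβpos
          _ = (1/2 + ε)^(i+1) * dotp x x := by ring
      have hne : (posPart (W i) z).mulVec z ≠ 0 := by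
        intro h0
        have : dotp ((posPart (W i) z).mulVec z) ((posPart (W i) z).mulVec z) = 0 := by
          rw [h0]; simp [dotp]
        have hpos : (0:ℝ) < (1/2 - ε)^(i+1) * dotp x x :=
          mul_pos (pow_pos hαpos _) hxx
        linarith [hlo'.trans_eq this]
      rw [hnext]
      exact ⟨hne, hlo', hhi'⟩

/-- Bernoulli-type upper bound: `(1+c)^d ≤ 1 + 2dc` when `dc ≤ 1/2`. -/
lemma pow_one_add_le {c : ℝ} (hc : 0 ≤ c) :
    ∀ d : ℕ, (d:ℝ) * c ≤ 1/2 → (1 + c)^d ≤ 1 + 2*(d:ℝ)*c := by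
  intro d
  induction d with
  | zero => intro _; norm_num
  | succ d ih =>
      intro hdc
      have hd : (d:ℝ) * c ≤ 1/2 := by
        push_cast at hdc
        nlinarith [Nat.cast_nonneg (α := ℝ) d]
      have h1 := ih hd
      have h2 : (1 + c)^(d+1) = (1 + c)^d * (1 + c) := by ring
      have h3 : (0:ℝ) ≤ 1 + c := by linarith
      have h4 : (1 + c)^d * (1 + c) ≤ (1 + 2*(d:ℝ)*c) * (1 + c) :=
        mul_le_mul_of_nonneg_right h1 h3
      have h5 : (1 + 2*(d:ℝ)*c) * (1 + c) ≤ 1 + 2*((d:ℝ)+1)*c := by nlinarith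
      push_cast
      rw [h2]
      linarith

set_option maxHeartbeats 1600000 in
/-- under the WDC, the ratio of output norms concentrates around
the ratio of input norms. -/
theorem statement6 (d : ℕ) (hd : 2 ≤ d) (ε : ℝ) (hε0 : 0 < ε)
    (hε1 : ε < ((d : ℝ) ^ 4)⁻¹ * (1 / (16 * π)) ^ 2)
    (n : ℕ → ℕ) (hn : ∀ i < d, n i < n (i + 1))
    (W : ∀ i : ℕ, Matrix (Fin (n (i + 1))) (Fin (n i)) ℝ)
    (hW : ∀ i < d, WDC (W i) ε) :
    ∀ x y : Fin (n 0) → ℝ, x ≠ 0 → y ≠ 0 →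
      |nrm ((layerProd n W d y).mulVec y) / nrm ((layerProd n W d x).mulVec x) -
          nrm y / nrm x| ≤
        8 * d * ε * (nrm y / nrm x) := by
  intro x y hx hy
  have hd2 : (2:ℝ) ≤ (d:ℝ) := by exact_mod_cast hd
  have hπ3 : (3:ℝ) < π := Real.pi_gt_three
  -- numeric smallness of ε
  have hc2 : (1/(16*π))^2 ≤ 1/16 := by
    have h1 : (0:ℝ) < 16*π := by linarith
    have h2 : 1/(16*π) ≤ 1/4 := by
      rw [div_le_div_iff₀ h1 (by norm_num)]
      linarith
    have h3 : (0:ℝ) ≤ 1/(16*π) := by positivity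
    nlinarith
  have hdpos : (0:ℝ) < (d:ℝ) := by linarith
  have hd4 : (d:ℝ) ≤ (d:ℝ)^4 := le_self_pow₀ (by linarith) (by norm_num)
  have hinv : ((d:ℝ)^4)⁻¹ ≤ ((d:ℝ))⁻¹ :=
    inv_anti₀ hdpos hd4
  have hεd : ε < ((d:ℝ))⁻¹ * (1/16) := by
    calc ε < ((d:ℝ)^4)⁻¹ * (1/(16*π))^2 := hε1
      _ ≤ ((d:ℝ))⁻¹ * (1/16) := by
          apply mul_le_mul hinv hc2 (by positivity) (by positivity)
  have hdε : (d:ℝ) * ε < 1/16 := by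
    have := mul_lt_mul_of_pos_left hεd hdpos
    rwa [← mul_assoc, mul_inv_cancel₀ hdpos.ne', one_mul] at this
  have hε2 : ε < 1/32 := by nlinarith
  have hε12 : ε < 1/2 := by linarith
  -- layer bounds
  obtain ⟨hxd, hxlo, hxhi⟩ := layerProd_bounds hε0 hε12 n W hW hx d le_rfl
  obtain ⟨hyd, hylo, hyhi⟩ := layerProd_bounds hε0 hε12 n W hW hy d le_rfl
  simp only [nrm_eq_sqrt]
  set a2 := dotp ((layerProd n W d x).mulVec x) ((layerProd n W d x).mulVec x) with ha2
  set b2 := dotp ((layerProd n W d y).mulVec y) ((layerProd n W d y).mulVec y) with hb2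
  set P := dotp x x with hP
  set Q := dotp y y with hQ
  have hPpos : 0 < P := dotp_self_pos hx
  have hQpos : 0 < Q := dotp_self_pos hy
  clear_value a2 b2 P Q
  clear hxd hyd hn hW hε1 hεd hinv hd4 hc2
  set α : ℝ := 1/2 - ε with hα
  set β : ℝ := 1/2 + ε with hβ
  have hαpos : 0 < α := by rw [hα]; linarith
  have hβpos : 0 < β := by rw [hβ]; linarith
  have ha2pos : 0 < a2 := lt_of_lt_of_le (mul_pos (pow_pos hαpos d) hPpos) hxlo
  have hb2pos : 0 < b2 := lt_of_lt_of_le (mul_pos (pow_pos hαpos d) hQpos) hylo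
  set t : ℝ := 8*(d:ℝ)*ε with ht
  clear_value α β t
  have ht0 : 0 ≤ t := by rw [ht]; positivity
  have ht12 : t ≤ 1/2 := by rw [ht]; nlinarith
  -- power comparison bounds
  have hd8ε : (d:ℝ) * (8*ε) ≤ 1/2 := by nlinarith
  have hup : β^d ≤ (1+t)^2 * α^d := by
    have h1 : β ≤ (1+8*ε) * α := by rw [hα, hβ]; nlinarith
    have h2 : β^d ≤ ((1+8*ε) * α)^d := pow_le_pow_left₀ (le_of_lt hβpos) h1 d
    have h3 : ((1+8*ε) * α)^d = (1+8*ε)^d * α^d := mul_pow _ _ _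
    have h4 : (1+8*ε)^d ≤ 1 + 2*(d:ℝ)*(8*ε) := pow_one_add_le (by linarith) d hd8ε
    have h5 : 1 + 2*(d:ℝ)*(8*ε) ≤ (1+t)^2 := by rw [ht]; nlinarith
    calc β^d ≤ (1+8*ε)^d * α^d := by rw [← h3]; exact h2
      _ ≤ (1 + 2*(d:ℝ)*(8*ε)) * α^d :=
          mul_le_mul_of_nonneg_right h4 (le_of_lt (pow_pos hαpos d))
      _ ≤ (1+t)^2 * α^d :=
          mul_le_mul_of_nonneg_right h5 (le_of_lt (pow_pos hαpos d))
  have hdown : (1-t) * β^d ≤ α^d := by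
    have h8ε : (0:ℝ) ≤ 1 - 8*ε := by linarith
    have h1 : (1-8*ε) * β ≤ α := by rw [hα, hβ]; nlinarith
    have h2 : ((1-8*ε) * β)^d ≤ α^d :=
      pow_le_pow_left₀ (mul_nonneg h8ε (le_of_lt hβpos)) h1 d
    have h3 : 1 - t ≤ (1-8*ε)^d := by
      have := one_add_mul_le_pow (a := -(8*ε)) (by linarith) d
      rw [ht]
      calc 1 - 8*(d:ℝ)*ε = 1 + (d:ℝ) * (-(8*ε)) := by ring
        _ ≤ (1 + -(8*ε))^d := this
        _ = (1-8*ε)^d := by rw [sub_eq_add_neg]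
    calc (1-t) * β^d ≤ (1-8*ε)^d * β^d :=
          mul_le_mul_of_nonneg_right h3 (le_of_lt (pow_pos hβpos d))
      _ = ((1-8*ε) * β)^d := (mul_pow _ _ _).symm
      _ ≤ α^d := h2
  -- squared ratio bounds
  have hA : α^d ≤ a2 / P := (le_div_iff₀ hPpos).mpr hxlo
  have hA' : a2 / P ≤ β^d := (div_le_iff₀ hPpos).mpr hxhi
  have hBup : b2 ≤ (1+t)^2 * (a2 * Q / P) := by
    calc b2 ≤ β^d * Q := hyhi
      _ ≤ ((1+t)^2 * α^d) * Q := mul_le_mul_of_nonneg_right hup (le_of_lt hQpos)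
      _ ≤ ((1+t)^2 * (a2/P)) * Q := by
          apply mul_le_mul_of_nonneg_right _ (le_of_lt hQpos)
          apply mul_le_mul_of_nonneg_left hA (by positivity)
      _ = (1+t)^2 * (a2 * Q / P) := by ring
  have hBdown : (1-t)^2 * (a2 * Q / P) ≤ b2 := by
    have h1t : (0:ℝ) ≤ 1 - t := by linarith
    have h1 : (1-t) * (a2/P) ≤ (1-t) * β^d := mul_le_mul_of_nonneg_left hA' h1t
    have h2 : (1-t) * β^d * Q ≤ α^d * Q := mul_le_mul_of_nonneg_right hdown (le_of_lt hQpos)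
    have h3 : (1-t)^2 * (a2 * Q / P) ≤ (1-t) * (a2 * Q / P) := by
      have hnn : (0:ℝ) ≤ a2 * Q / P := by positivity
      have h4 : (1-t)^2 ≤ 1-t := by nlinarith
      exact mul_le_mul_of_nonneg_right h4 hnn
    calc (1-t)^2 * (a2 * Q / P) ≤ (1-t) * (a2 * Q / P) := h3
      _ = (1-t) * (a2/P) * Q := by ring
      _ ≤ (1-t) * β^d * Q := mul_le_mul_of_nonneg_right h1 (le_of_lt hQpos)
      _ ≤ α^d * Q := h2
      _ ≤ b2 := hylo
  -- take square roots
  have hsapos : 0 < Real.sqrt a2 := Real.sqrt_pos.mpr ha2pos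
  have hsPpos : 0 < Real.sqrt P := Real.sqrt_pos.mpr hPpos
  have hsQ0 : 0 ≤ Real.sqrt Q := Real.sqrt_nonneg _
  have sqrec : ∀ c : ℝ, 0 ≤ c →
      (c * Real.sqrt a2 * Real.sqrt Q / Real.sqrt P)^2 = c^2 * (a2 * Q / P) := by
    intro c hc
    rw [div_pow, mul_pow, mul_pow, Real.sq_sqrt (le_of_lt ha2pos),
      Real.sq_sqrt (le_of_lt hQpos), Real.sq_sqrt (le_of_lt hPpos)]
    ring
  have hup' : Real.sqrt b2 ≤ (1+t) * Real.sqrt a2 * Real.sqrt Q / Real.sqrt P := by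
    have hnn : 0 ≤ (1+t) * Real.sqrt a2 * Real.sqrt Q / Real.sqrt P := by positivity
    have h1 : Real.sqrt b2 ≤ Real.sqrt ((1+t)^2 * (a2 * Q / P)) := Real.sqrt_le_sqrt hBup
    rwa [← sqrec (1+t) (by linarith), Real.sqrt_sq hnn] at h1
  have hdown' : (1-t) * Real.sqrt a2 * Real.sqrt Q / Real.sqrt P ≤ Real.sqrt b2 := by
    have h1t : (0:ℝ) ≤ 1 - t := by linarith
    have hnn : 0 ≤ (1-t) * Real.sqrt a2 * Real.sqrt Q / Real.sqrt P := by positivity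
    have h1 : Real.sqrt ((1-t)^2 * (a2 * Q / P)) ≤ Real.sqrt b2 := Real.sqrt_le_sqrt hBdown
    rwa [← sqrec (1-t) h1t, Real.sqrt_sq hnn] at h1
  -- conclude
  rw [abs_le]
  have hru : Real.sqrt b2 / Real.sqrt a2 ≤ (1+t) * (Real.sqrt Q / Real.sqrt P) := by
    rw [div_le_iff₀ hsapos]
    calc Real.sqrt b2 ≤ (1+t) * Real.sqrt a2 * Real.sqrt Q / Real.sqrt P := hup'
      _ = (1+t) * (Real.sqrt Q / Real.sqrt P) * Real.sqrt a2 := by ring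
  have hrd : (1-t) * (Real.sqrt Q / Real.sqrt P) ≤ Real.sqrt b2 / Real.sqrt a2 := by
    rw [le_div_iff₀ hsapos]
    calc (1-t) * (Real.sqrt Q / Real.sqrt P) * Real.sqrt a2
        = (1-t) * Real.sqrt a2 * Real.sqrt Q / Real.sqrt P := by ring
      _ ≤ Real.sqrt b2 := hdown'
  constructor <;> nlinarith [hru, hrd]
end DPR
end
end

section
/- Let d ≥ 2, let 0 < ε < 1/4 satisfy 24·π·d⁶·√ε ≤ 1, and fix nonzero x₀ ∈ ℝ^k. Then every x ∈ S_{ε,x₀} satisfies ‖x‖ ≤ 6·d·‖x₀‖; in particular max(‖x‖, ‖x₀‖) ≤ 6·d·‖x₀‖ for all x ∈ S_{ε,x₀}. -/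
open Real Filter Set MeasureTheory ProbabilityTheory Matrix
open scoped Classical BigOperators NNReal ENNReal

noncomputable section

namespace DPR

private lemma nrm_eq_norm {k : ℕ} (v : Fin k → ℝ) :
    nrm v = ‖(WithLp.equiv 2 (Fin k → ℝ)).symm v‖ := by
  rw [EuclideanSpace.norm_eq]
  unfold nrm dotp
  congr 1
  exact Finset.sum_congr rfl fun i _ => by simp [sq_abs, sq]

private lemma nrm_smul' {k : ℕ} (c : ℝ) (v : Fin k → ℝ) : nrm (c • v) = |c| * nrm v := by
  rw [nrm_eq_norm, nrm_eq_norm]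
  show ‖c • (WithLp.equiv 2 (Fin k → ℝ)).symm v‖ = _
  rw [norm_smul, Real.norm_eq_abs]

private lemma nrm_pos' {k : ℕ} {v : Fin k → ℝ} (h : v ≠ 0) : 0 < nrm v := by
  rw [nrm_eq_norm]
  exact norm_pos_iff.2 (by simpa using h)

private lemma nrm_sub_le_add {k : ℕ} (u v : Fin k → ℝ) : nrm v - nrm u ≤ nrm (u + v) := by
  have h2 : nrm (u + v) = ‖(WithLp.equiv 2 (Fin k → ℝ)).symm u + (WithLp.equiv 2 (Fin k → ℝ)).symm v‖ :=
    nrm_eq_norm _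
  have hv : (WithLp.equiv 2 (Fin k → ℝ)).symm v =
      ((WithLp.equiv 2 (Fin k → ℝ)).symm u + (WithLp.equiv 2 (Fin k → ℝ)).symm v) -
        (WithLp.equiv 2 (Fin k → ℝ)).symm u := by abel
  have h := norm_sub_le ((WithLp.equiv 2 (Fin k → ℝ)).symm u + (WithLp.equiv 2 (Fin k → ℝ)).symm v)
    ((WithLp.equiv 2 (Fin k → ℝ)).symm u)
  rw [← hv] at h
  rw [nrm_eq_norm u, nrm_eq_norm v, h2]
  linarith

private lemma theta_mem' (θ₀ : ℝ) (h : θ₀ ∈ Set.Icc 0 π) : ∀ i, thetaSeq θ₀ i ∈ Set.Icc 0 π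
  | 0 => h
  | i + 1 => by
      show gfun (thetaSeq θ₀ i) ∈ _
      exact ⟨Real.arccos_nonneg _, Real.arccos_le_pi _⟩

private lemma angl_mem' {n : ℕ} (u v : Fin n → ℝ) : angl u v ∈ Set.Icc 0 π :=
  ⟨Real.arccos_nonneg _, Real.arccos_le_pi _⟩


set_option maxHeartbeats 1000000 in
/-- every point of `S_{ε,x₀}` has norm at most `6d‖x₀‖`. -/
theorem statement19 (d : ℕ) (hd : 2 ≤ d) (ε : ℝ) (hε0 : 0 < ε) (hε1 : ε < 1 / 4)
    (hε2 : 24 * π * (d : ℝ) ^ 6 * Real.sqrt ε ≤ 1)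
    {k : ℕ} (x₀ : Fin k → ℝ) (hx₀ : x₀ ≠ 0) :
    ∀ x ∈ Sset d ε x₀,
      nrm x ≤ 6 * d * nrm x₀ ∧ max (nrm x) (nrm x₀) ≤ 6 * d * nrm x₀ := by
  intro x hx
  obtain ⟨hxne, hle⟩ := hx
  have hπ : (0:ℝ) < π := Real.pi_pos
  have h2π : (2:ℝ) ≤ π := by linarith [Real.pi_gt_three]
  have hx0pos : 0 < nrm x₀ := nrm_pos' hx₀
  have hxpos : 0 < nrm x := nrm_pos' hxne
  have hd2 : (2:ℝ) ≤ (d:ℝ) := by exact_mod_cast hd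
  have hmem : ∀ i, thetaSeq (angl x x₀) i ∈ Set.Icc 0 π := theta_mem' _ (angl_mem' x x₀)
  set θ : ℕ → ℝ := thetaSeq (angl x x₀) with hθdef
  have hfac : ∀ i, 0 ≤ (π - θ i) / π ∧ (π - θ i) / π ≤ 1 := fun i =>
    ⟨div_nonneg (by linarith [(hmem i).2]) hπ.le,
     div_le_one_of_le₀ (by linarith [(hmem i).1]) hπ.le⟩
  have hprod : ∀ s : Finset ℕ, 0 ≤ (∏ j ∈ s, (π - θ j) / π) ∧ (∏ j ∈ s, (π - θ j) / π) ≤ 1 :=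
    fun s => ⟨Finset.prod_nonneg fun j _ => (hfac j).1,
      Finset.prod_le_one (fun j _ => (hfac j).1) (fun j _ => (hfac j).2)⟩
  have hterm : ∀ i, 0 ≤ Real.sin (θ i) / π * ∏ j ∈ Finset.Ico (i+1) d, (π - θ j) / π ∧
      Real.sin (θ i) / π * ∏ j ∈ Finset.Ico (i+1) d, (π - θ j) / π ≤ 1 := by
    intro i
    have hs0 : 0 ≤ Real.sin (θ i) := Real.sin_nonneg_of_nonneg_of_le_pi (hmem i).1 (hmem i).2
    have hs1 : Real.sin (θ i) ≤ 1 := Real.sin_le_one _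
    exact ⟨mul_nonneg (div_nonneg hs0 hπ.le) (hprod _).1,
      mul_le_one₀ (div_le_one_of_le₀ (by linarith) hπ.le) (hprod _).1 (hprod _).2⟩
  set S := ∑ i ∈ Finset.range d, Real.sin (θ i) / π * ∏ j ∈ Finset.Ico (i+1) d, (π - θ j) / π
    with hSdef
  have hS0 : 0 ≤ S := Finset.sum_nonneg fun i _ => (hterm i).1
  have hSd : S ≤ (d:ℝ) := by
    calc S ≤ ∑ _i ∈ Finset.range d, (1:ℝ) := Finset.sum_le_sum fun i _ => (hterm i).2
    _ = (d:ℝ) := by simp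
  set T := (π - 2 * θ d) / π with hTdef
  have hT : |T| ≤ 1 := by
    rw [hTdef, abs_div, abs_of_pos hπ]
    apply div_le_one_of_le₀ _ hπ.le
    rw [abs_le]
    exact ⟨by linarith [(hmem d).2], by linarith [(hmem d).1]⟩
  set P := ∏ i ∈ Finset.range d, (π - θ i) / π with hPdef
  have hP : 0 ≤ P ∧ P ≤ 1 := hprod _
  set a := -(nrm x₀ / 2 ^ d) * T * P with hadef
  set b := (1 / 2 ^ d) * (nrm x - nrm x₀ * (2 * Real.sin (θ d) / π - T * S)) with hbdef
  have hdecomp : hvec d x x₀ = a • ((nrm x₀)⁻¹ • x₀) + b • ((nrm x)⁻¹ • x) := by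
    rw [hadef, hbdef, hTdef, hSdef, hPdef, hθdef]
    unfold hvec
    rfl
  clear_value θ S T P a b
  have h2d : (0:ℝ) < 2 ^ d := by positivity
  have hux : nrm ((nrm x)⁻¹ • x) = 1 := by
    rw [nrm_smul', abs_of_pos (inv_pos.2 hxpos), inv_mul_cancel₀ hxpos.ne']
  have hux0 : nrm ((nrm x₀)⁻¹ • x₀) = 1 := by
    rw [nrm_smul', abs_of_pos (inv_pos.2 hx0pos), inv_mul_cancel₀ hx0pos.ne']
  have h1 : |b| - |a| ≤ nrm (hvec d x x₀) := by
    have := nrm_sub_le_add (a • ((nrm x₀)⁻¹ • x₀)) (b • ((nrm x)⁻¹ • x))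
    rw [nrm_smul', hux, nrm_smul', hux0, mul_one, mul_one, ← hdecomp] at this
    exact this
  have haP : |a| ≤ nrm x₀ / 2 ^ d := by
    have h0 : |a| = nrm x₀ / 2 ^ d * (|T| * |P|) := by
      rw [hadef, abs_mul, abs_mul, abs_neg, abs_of_pos (div_pos hx0pos h2d)]
      ring
    rw [h0]
    have : |T| * |P| ≤ 1 := mul_le_one₀ hT (abs_nonneg _) (abs_le.2 ⟨by linarith [hP.1], hP.2⟩)
    nlinarith [div_pos hx0pos h2d]
  have hcle : 2 * Real.sin (θ d) / π - T * S ≤ (d:ℝ) + 1 := by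
    have hh1 : 2 * Real.sin (θ d) / π ≤ 1 := by
      rw [div_le_one hπ]
      linarith [Real.sin_le_one (θ d)]
    have hh2 : -(T * S) ≤ S := by nlinarith [abs_le.1 hT]
    linarith
  have hblow : (1 / 2 ^ d) * (nrm x - nrm x₀ * ((d:ℝ) + 1)) ≤ b := by
    rw [hbdef]
    have : nrm x₀ * (2 * Real.sin (θ d) / π - T * S) ≤ nrm x₀ * ((d:ℝ) + 1) :=
      mul_le_mul_of_nonneg_left hcle hx0pos.le
    have h12 : (0:ℝ) ≤ 1 / 2 ^ d := by positivity
    apply mul_le_mul_of_nonneg_left _ h12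
    linarith
  have hchain : (1 / 2 ^ d) * (nrm x - nrm x₀ * ((d:ℝ) + 1)) ≤
      (1 / 2 ^ d) * (ε * max (nrm x) (nrm x₀) + nrm x₀) := by
    calc (1 / 2 ^ d) * (nrm x - nrm x₀ * ((d:ℝ) + 1)) ≤ b := hblow
    _ ≤ |b| := le_abs_self b
    _ ≤ nrm (hvec d x x₀) + |a| := by linarith
    _ ≤ ε / 2 ^ d * max (nrm x) (nrm x₀) + nrm x₀ / 2 ^ d := add_le_add hle haP
    _ = (1 / 2 ^ d) * (ε * max (nrm x) (nrm x₀) + nrm x₀) := by ring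
  have key : nrm x - nrm x₀ * ((d:ℝ) + 1) ≤ ε * max (nrm x) (nrm x₀) + nrm x₀ :=
    (mul_le_mul_iff_right₀ (show (0:ℝ) < 1 / 2 ^ d by positivity)).1 hchain
  clear hle h1 hblow hchain hterm hprod hfac hmem hdecomp hSdef hTdef hPdef hadef hbdef hθdef hT hS0 hSd hP haP hcle hux hux0 hε2
  have hx6 : nrm x ≤ 6 * d * nrm x₀ := by
    rcases le_total (nrm x) (nrm x₀) with h | h
    · nlinarith [mul_nonneg (show (0:ℝ) ≤ 6 * (d:ℝ) - 1 by linarith) hx0pos.le]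
    · rw [max_eq_left h] at key
      have hεx : ε * nrm x ≤ (1/4) * nrm x := by nlinarith
      nlinarith [mul_le_mul_of_nonneg_right hd2 hx0pos.le]
  exact ⟨hx6, max_le hx6 (by nlinarith [mul_nonneg (show (0:ℝ) ≤ 6 * (d:ℝ) - 1 by linarith) hx0pos.le])⟩
end DPR
end
end
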